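/- Let k be a field and let ĝ : ℝ → ℝ be the hat function ĝ(t) = 2·min(t, 1−t). Then the persistence module M_ĝ : P ⥤ ModuleCat k is indecomposable: whenever M_ĝ is isomorphic in the functor category to a biproduct A ⊞ B of two functors A, B : P ⥤ ModuleCat k, either A(p) = 0 for all p ∈ P or B(p) = 0 for all p ∈ P. -/

import Mathlib

open CategoryTheory

noncomputable section

/-- The map induced on connected components by an inclusion of subspaces. -/
def compMap {Y : Type} [TopologicalSpace Y] {A B : Set Y} (h : A ⊆ B) :
    ConnectedComponents A → ConnectedComponents B :=
  (continuous_inclusion h).connectedComponentsMap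

lemma compMap_id {Y : Type} [TopologicalSpace Y] {A : Set Y} (h : A ⊆ A) :
    compMap h = id := by
  funext x
  obtain ⟨y, rfl⟩ := ConnectedComponents.surjective_coe x
  rfl

lemma compMap_comp {Y : Type} [TopologicalSpace Y] {A B C : Set Y}
    (hAB : A ⊆ B) (hBC : B ⊆ C) (hAC : A ⊆ C) :
    compMap hAC = compMap hBC ∘ compMap hAB := by
  funext x
  obtain ⟨y, rfl⟩ := ConnectedComponents.surjective_coe x
  rfl

/-- The persistence module (valued in free `k`-modules on connected components)
associated to a monotone family of subspaces indexed by a poset: it assigns to `p`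
the free `k`-module on the set of connected components of `A p`, and to each
relation `p ≤ q` the `k`-linear map sending the basis element of a connected
component of `A p` to the basis element of the connected component of `A q`
containing it. -/
def compFunctor (k : Type) [Field k] {α : Type} [Preorder α] {Y : Type} [TopologicalSpace Y]
    (A : α → Set Y) (mono : Monotone A) : α ⥤ ModuleCat k where
  obj p := ModuleCat.of k (ConnectedComponents (A p) →₀ k)
  map {p q} h := ModuleCat.ofHom (Finsupp.lmapDomain k k (compMap (mono (leOfHom h))))
  map_id p := by
    apply ModuleCat.hom_ext
    show Finsupp.lmapDomain k k _ = _
    rw [compMap_id]; exact Finsupp.lmapDomain_id _ _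
  map_comp {p q r} f g := by
    apply ModuleCat.hom_ext
    show Finsupp.lmapDomain k k _ = _
    rw [compMap_comp (mono (leOfHom f)) (mono (leOfHom g))]
    exact Finsupp.lmapDomain_comp _ _ _ _

/-- The sublevel set `S(a,b,c) = {t ∈ ℝ : a ≤ t ≤ b and g t ≤ c}`. -/
def Slev (g : ℝ → ℝ) (a b c : ℝ) : Set ℝ := {t : ℝ | a ≤ t ∧ t ≤ b ∧ g t ≤ c}

/-- The indexing poset `P = {(a,b,c) ∈ ℝ³ : 0 ≤ a ≤ b ≤ 1}` with
`(a,b,c) ⊑ (a',b',c')` iff `a' ≤ a`, `b ≤ b'` and `c ≤ c'`. -/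
def PP : Type := {p : ℝ × ℝ × ℝ // 0 ≤ p.1 ∧ p.1 ≤ p.2.1 ∧ p.2.1 ≤ 1}

namespace PP

instance : PartialOrder PP where
  le p q := q.1.1 ≤ p.1.1 ∧ p.1.2.1 ≤ q.1.2.1 ∧ p.1.2.2 ≤ q.1.2.2
  le_refl p := ⟨le_refl _, le_refl _, le_refl _⟩
  le_trans p q r h h' := ⟨h'.1.trans h.1, h.2.1.trans h'.2.1, h.2.2.trans h'.2.2⟩
  le_antisymm p q h h' :=
    Subtype.ext (Prod.ext (le_antisymm h'.1 h.1)
      (Prod.ext (le_antisymm h.2.1 h'.2.1) (le_antisymm h.2.2 h'.2.2)))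

/-- The coordinate `a` of a point of `P`. -/
def a (p : PP) : ℝ := p.1.1
/-- The coordinate `b` of a point of `P`. -/
def b (p : PP) : ℝ := p.1.2.1
/-- The coordinate `c` of a point of `P`. -/
def c (p : PP) : ℝ := p.1.2.2

lemma le_def {p q : PP} : p ≤ q ↔ q.a ≤ p.a ∧ p.b ≤ q.b ∧ p.c ≤ q.c := Iff.rfl

end PP

lemma Slev_mono (g : ℝ → ℝ) : Monotone (fun p : PP => Slev g p.a p.b p.c) :=
  fun _ _ h _ ht => ⟨h.1.trans ht.1, ht.2.1.trans h.2.1, ht.2.2.trans h.2.2⟩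

/-- The persistence module `M_g : P ⥤ ModuleCat k` of a function `g : ℝ → ℝ`:
it assigns to `(a,b,c) ∈ P` the free `k`-module on the set of connected components of
the sublevel set `S(a,b,c)`, and to each relation `(a,b,c) ⊑ (a',b',c')` the `k`-linear
map sending the basis element corresponding to a component `C` of `S(a,b,c)` to the basis
element corresponding to the unique component of `S(a',b',c')` containing `C`. -/
def Mg (k : Type) [Field k] (g : ℝ → ℝ) : PP ⥤ ModuleCat k :=
  compFunctor k (fun p : PP => Slev g p.a p.b p.c) (Slev_mono g)

/-- The hat function `ĝ(t) = 2·min(t, 1−t)`. -/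
def hatg (t : ℝ) : ℝ := 2 * min t (1 - t)

----------------------------------------------------------------
-- auxiliary development
----------------------------------------------------------------

namespace MgHat

lemma hatg_le_one (t : ℝ) : hatg t ≤ 1 := by
  unfold hatg
  rcases le_total t (1-t) with h | h
  · rw [min_eq_left h]; linarith
  · rw [min_eq_right h]; linarith

abbrev S (p : PP) : Set ℝ := Slev hatg p.a p.b p.c

lemma mem_S {p : PP} {t : ℝ} : t ∈ S p ↔ p.a ≤ t ∧ t ≤ p.b ∧ hatg t ≤ p.c := Iff.rfl

def pstar : PP := ⟨(0,1,1), by norm_num⟩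

lemma S_pstar : S pstar = Set.Icc 0 1 := by
  ext t
  simp only [Slev, Set.mem_setOf_eq, Set.mem_Icc, pstar, PP.a, PP.b, PP.c]
  exact ⟨fun h => ⟨h.1, h.2.1⟩, fun h => ⟨h.1, h.2, hatg_le_one t⟩⟩

lemma zero_mem_pstar : (0:ℝ) ∈ S pstar := by rw [S_pstar]; exact ⟨le_refl _, zero_le_one⟩

lemma subsingleton_cc {p : PP} (h : _root_.IsPreconnected (S p)) :
    Subsingleton (_root_.ConnectedComponents (S p)) := by
  haveI := Subtype.preconnectedSpace h
  constructor; intro x y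
  obtain ⟨u, rfl⟩ := ConnectedComponents.surjective_coe x
  obtain ⟨v, rfl⟩ := ConnectedComponents.surjective_coe y
  rw [ConnectedComponents.coe_eq_coe]
  simp [PreconnectedSpace.connectedComponent_eq_univ]

variable (k : Type) [Field k]

/-- The "good" predicate. -/
def Good (φ : Mg k hatg ⟶ Mg k hatg) (p : PP) (t : ℝ) (ht : t ∈ S p) (μ : k) : Prop :=
  φ.app p (Finsupp.single (ConnectedComponents.mk (⟨t, ht⟩ : S p)) 1)
    = μ • Finsupp.single (ConnectedComponents.mk (⟨t, ht⟩ : S p)) 1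

lemma eq_smul_single {ι : Type} [Subsingleton ι] (x : ι) (v : ι →₀ k) :
    v = (v x) • Finsupp.single x 1 := by
  ext j
  rw [Subsingleton.elim j x]
  simp

lemma good_of_preconnected (φ : Mg k hatg ⟶ Mg k hatg) {p : PP}
    (h : _root_.IsPreconnected (S p)) (t : ℝ) (ht : t ∈ S p) :
    ∃ μ : k, Good k φ p t ht μ := by
  haveI := subsingleton_cc h
  set x : _root_.ConnectedComponents (S p) := ConnectedComponents.mk ⟨t, ht⟩ with hx
  exact ⟨_, eq_smul_single k x ((φ.app p) (Finsupp.single x 1))⟩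

lemma map_single (p q : PP) (hpq : p ≤ q) (t : ℝ) (ht : t ∈ S p) :
    (Mg k hatg).map (homOfLE hpq) (Finsupp.single (ConnectedComponents.mk (⟨t, ht⟩ : S p)) 1)
      = Finsupp.single (ConnectedComponents.mk (⟨t, Slev_mono hatg hpq ht⟩ : S q)) 1 := by
  show Finsupp.lmapDomain k k _ _ = _
  rw [Finsupp.lmapDomain_apply, Finsupp.mapDomain_single]
  rfl

lemma good_mono (φ : Mg k hatg ⟶ Mg k hatg) {p q : PP} (hpq : p ≤ q) {t : ℝ}
    {ht : t ∈ S p} {μ : k} (h : Good k φ p t ht μ) :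
    Good k φ q t (Slev_mono hatg hpq ht) μ := by
  unfold Good at h ⊢
  have nat := φ.naturality (homOfLE hpq)
  have := congrArg (fun (f : (Mg k hatg).obj p ⟶ (Mg k hatg).obj q) =>
    f (Finsupp.single (ConnectedComponents.mk (⟨t, ht⟩ : S p)) 1)) nat
  erw [CategoryTheory.comp_apply, CategoryTheory.comp_apply] at this
  erw [map_single k p q hpq t ht] at this
  erw [this, h, map_smul, map_single k p q hpq t ht]
  rfl

end MgHat

namespace MgHat
variable (k : Type) [Field k]

lemma S_pstar_preconn : _root_.IsPreconnected (S pstar) := by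
  rw [S_pstar]; exact isPreconnected_Icc

/-- The scalar of an endomorphism at the basepoint. -/
def lam (φ : Mg k hatg ⟶ Mg k hatg) : k :=
  (show _root_.ConnectedComponents (S pstar) →₀ k from
    φ.app pstar (Finsupp.single (ConnectedComponents.mk (⟨0, zero_mem_pstar⟩ : S pstar)) 1))
    (ConnectedComponents.mk ⟨0, zero_mem_pstar⟩)

lemma good_pstar_unique (φ : Mg k hatg ⟶ Mg k hatg) {t : ℝ} {ht : t ∈ S pstar} {μ : k}
    (h : Good k φ pstar t ht μ) : μ = lam k φ := by
  haveI := subsingleton_cc S_pstar_preconn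
  have hy : (ConnectedComponents.mk (⟨t, ht⟩ : S pstar))
      = ConnectedComponents.mk (⟨0, zero_mem_pstar⟩ : S pstar) := Subsingleton.elim _ _
  unfold Good at h
  rw [hy] at h
  have h2 : (show _root_.ConnectedComponents (S pstar) →₀ k from
      φ.app pstar (Finsupp.single (ConnectedComponents.mk (⟨0, zero_mem_pstar⟩ : S pstar)) 1))
      = μ • Finsupp.single (ConnectedComponents.mk (⟨0, zero_mem_pstar⟩ : S pstar)) 1 := h
  unfold lam
  rw [h2]
  simp

lemma exists_r (p : PP) (t : ℝ) (ht : t ∈ S p) :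
    ∃ (r : PP) (htr : t ∈ S r), r ≤ p ∧ r ≤ pstar ∧ _root_.IsPreconnected (S r) := by
  obtain ⟨h1, h2, h3⟩ := ht
  have h0a : (0:ℝ) ≤ p.a := p.2.1
  have hab : p.a ≤ p.b := p.2.2.1
  have hb1 : p.b ≤ 1 := p.2.2.2
  rcases le_total t (1 - t) with hmin | hmin
  · have htc : t ≤ p.c / 2 := by
      unfold hatg at h3; rw [min_eq_left hmin] at h3; linarith
    refine ⟨⟨(p.a, min p.b (p.c/2), min p.c 1),
      h0a, le_min hab (h1.trans htc), (min_le_left _ _).trans hb1⟩, ?_, ?_, ?_, ?_⟩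
    · exact ⟨h1, le_min h2 htc, le_min (by unfold hatg; nlinarith [min_le_left t (1-t)])
        (hatg_le_one t)⟩
    · exact ⟨le_refl _, min_le_left _ _, min_le_left _ _⟩
    · exact ⟨h0a, (min_le_left _ _).trans hb1, min_le_right _ _⟩
    · have hS : Slev hatg p.a (min p.b (p.c/2)) (min p.c 1)
          = Set.Icc p.a (min p.b (p.c/2)) := by
        ext s
        simp only [Slev, Set.mem_setOf_eq, Set.mem_Icc]
        refine ⟨fun h => ⟨h.1, h.2.1⟩, fun h => ⟨h.1, h.2, le_min ?_ (hatg_le_one s)⟩⟩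
        have hs2 : s ≤ p.c/2 := h.2.trans (min_le_right _ _)
        unfold hatg; nlinarith [min_le_left s (1-s)]
      show _root_.IsPreconnected (Slev hatg p.a (min p.b (p.c/2)) (min p.c 1))
      rw [hS]
      exact isPreconnected_Icc
  · have htc : 1 - p.c / 2 ≤ t := by
      unfold hatg at h3; rw [min_eq_right hmin] at h3; linarith
    refine ⟨⟨(max p.a (1 - p.c/2), p.b, min p.c 1),
      le_max_of_le_left h0a, max_le hab (htc.trans h2), hb1⟩, ?_, ?_, ?_, ?_⟩
    · exact ⟨max_le h1 htc, h2, le_min (by unfold hatg; nlinarith [min_le_right t (1-t)])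
        (hatg_le_one t)⟩
    · exact ⟨le_max_left _ _, le_refl _, min_le_left _ _⟩
    · exact ⟨le_max_of_le_left h0a, hb1, min_le_right _ _⟩
    · have hS : Slev hatg (max p.a (1 - p.c/2)) p.b (min p.c 1)
          = Set.Icc (max p.a (1 - p.c/2)) p.b := by
        ext s
        simp only [Slev, Set.mem_setOf_eq, Set.mem_Icc]
        refine ⟨fun h => ⟨h.1, h.2.1⟩, fun h => ⟨h.1, h.2, le_min ?_ (hatg_le_one s)⟩⟩
        have hs2 : 1 - p.c/2 ≤ s := (le_max_right _ _).trans h.1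
        unfold hatg; nlinarith [min_le_right s (1-s)]
      show _root_.IsPreconnected (Slev hatg (max p.a (1 - p.c/2)) p.b (min p.c 1))
      rw [hS]
      exact isPreconnected_Icc

lemma app_single (φ : Mg k hatg ⟶ Mg k hatg) (p : PP) (t : ℝ) (ht : t ∈ S p) :
    Good k φ p t ht (lam k φ) := by
  obtain ⟨r, htr, hrp, hrstar, hconn⟩ := exists_r p t ht
  obtain ⟨μ, hμ⟩ := good_of_preconnected k φ hconn t htr
  have h2 := good_mono k φ hrstar hμ
  have hl : μ = lam k φ := good_pstar_unique k φ h2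
  have h1 := good_mono k φ hrp hμ
  rw [hl] at h1
  exact h1

end MgHat

/-- **Indecomposability of the persistence module of the hat function.**
The persistence module `M_ĝ : P ⥤ ModuleCat k` of the hat function
`ĝ(t) = 2·min(t, 1−t)` is indecomposable: whenever `M_ĝ` is isomorphic in the
functor category to a biproduct `A ⊞ B`, either `A` is pointwise zero or `B` is
pointwise zero. -/
theorem Mg_hat_indecomposable (k : Type) [Field k]
    (A B : PP ⥤ ModuleCat k) (h : Mg k hatg ≅ A ⊞ B) :
    (∀ p : PP, Limits.IsZero (A.obj p)) ∨ (∀ p : PP, Limits.IsZero (B.obj p)) := by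
  classical
  set e : Mg k hatg ⟶ Mg k hatg :=
    h.hom ≫ (Limits.biprod.fst ≫ Limits.biprod.inl) ≫ h.inv with he_def
  have he : e ≫ e = e := by
    simp [he_def]
  set l := MgHat.lam k e with hl
  set y0 : _root_.ConnectedComponents (MgHat.S MgHat.pstar) :=
    ConnectedComponents.mk ⟨0, MgHat.zero_mem_pstar⟩ with hy0
  have h1 : (e.app MgHat.pstar) (Finsupp.single y0 1) = l • Finsupp.single y0 1 :=
    MgHat.app_single k e MgHat.pstar 0 MgHat.zero_mem_pstar
  have happ : e.app MgHat.pstar ≫ e.app MgHat.pstar = e.app MgHat.pstar := by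
    rw [← NatTrans.comp_app, he]
  have h2 : (e.app MgHat.pstar) ((e.app MgHat.pstar) (Finsupp.single y0 1))
      = (e.app MgHat.pstar) (Finsupp.single y0 1) := by
    have := congrArg (fun (f : (Mg k hatg).obj MgHat.pstar ⟶ (Mg k hatg).obj MgHat.pstar) =>
      f (Finsupp.single y0 1)) happ
    erw [CategoryTheory.comp_apply] at this
    exact this
  have h3 : ((l*l) • Finsupp.single y0 (1:k) :
      _root_.ConnectedComponents (MgHat.S MgHat.pstar) →₀ k) = l • Finsupp.single y0 1 := by
    calc ((l*l) • Finsupp.single y0 (1:k) :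
        _root_.ConnectedComponents (MgHat.S MgHat.pstar) →₀ k)
        = l • (l • Finsupp.single y0 (1:k)) := mul_smul l l _
      _ = @id (_root_.ConnectedComponents (MgHat.S MgHat.pstar) →₀ k) (l • (e.app MgHat.pstar (Finsupp.single y0 1))) := by rw [h1]; rfl
      _ = @id (_root_.ConnectedComponents (MgHat.S MgHat.pstar) →₀ k) (e.app MgHat.pstar (l • Finsupp.single y0 1)) := (map_smul _ _ _).symm
      _ = @id (_root_.ConnectedComponents (MgHat.S MgHat.pstar) →₀ k) (e.app MgHat.pstar (e.app MgHat.pstar (Finsupp.single y0 1))) := by rw [h1]; rfl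
      _ = @id (_root_.ConnectedComponents (MgHat.S MgHat.pstar) →₀ k) (e.app MgHat.pstar (Finsupp.single y0 1)) := h2
      _ = l • Finsupp.single y0 1 := h1
  have hll : l * l = l := by
    have := DFunLike.congr_fun h3 y0
    simpa using this
  have hcases : l = 0 ∨ l = 1 := by
    have hfac : l * (l - 1) = 0 := by ring_nf; linear_combination hll
    rcases mul_eq_zero.mp hfac with h' | h'
    · exact Or.inl h'
    · exact Or.inr (by linear_combination h')
  have happsingle : ∀ (p : PP) (x : _root_.ConnectedComponents (MgHat.S p)) (b : k),
      e.app p (Finsupp.single x b) = (b * l) • Finsupp.single x 1 := by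
    intro p x b
    obtain ⟨y, rfl⟩ := ConnectedComponents.surjective_coe x
    obtain ⟨t, htp⟩ := y
    have hg := MgHat.app_single k e p t htp
    have hb : Finsupp.single (ConnectedComponents.mk (⟨t,htp⟩ : MgHat.S p)) b
        = b • Finsupp.single (ConnectedComponents.mk (⟨t,htp⟩ : MgHat.S p)) (1:k) := by
      rw [Finsupp.smul_single, smul_eq_mul, mul_one]
    rw [hb]; erw [map_smul]
    rw [show (e.app p) (Finsupp.single (ConnectedComponents.mk (⟨t,htp⟩ : MgHat.S p)) 1)
        = l • Finsupp.single (ConnectedComponents.mk (⟨t,htp⟩ : MgHat.S p)) 1 from hg]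
    erw [smul_smul]
    rfl
  have hconj : ∀ p : PP, (Limits.biprod.fst : A ⊞ B ⟶ A).app p ≫
      (Limits.biprod.inl : A ⟶ A ⊞ B).app p = h.inv.app p ≫ e.app p ≫ h.hom.app p := by
    intro p
    simp [he_def]
  rcases hcases with hl0 | hl1
  · left
    intro p
    have hz : e.app p = 0 := by
      apply ModuleCat.hom_ext
      apply Finsupp.lhom_ext
      intro a b
      erw [happsingle p a b]
      rw [hl0, mul_zero]; erw [zero_smul]
      rfl
    have hfst0 : (Limits.biprod.fst : A ⊞ B ⟶ A).app p ≫
        (Limits.biprod.inl : A ⟶ A ⊞ B).app p = 0 := by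
      rw [hconj p, hz, Limits.zero_comp, Limits.comp_zero]
    have hif : (Limits.biprod.inl : A ⟶ A ⊞ B).app p ≫
        (Limits.biprod.fst : A ⊞ B ⟶ A).app p = 𝟙 (A.obj p) := by
      rw [← NatTrans.comp_app]
      simp
    rw [Limits.IsZero.iff_id_eq_zero]
    calc 𝟙 (A.obj p)
        = ((Limits.biprod.inl : A ⟶ A ⊞ B).app p ≫ (Limits.biprod.fst : A ⊞ B ⟶ A).app p) ≫
          ((Limits.biprod.inl : A ⟶ A ⊞ B).app p ≫ (Limits.biprod.fst : A ⊞ B ⟶ A).app p) := by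
          rw [hif]; simp
      _ = (Limits.biprod.inl : A ⟶ A ⊞ B).app p ≫
          ((Limits.biprod.fst : A ⊞ B ⟶ A).app p ≫ (Limits.biprod.inl : A ⟶ A ⊞ B).app p) ≫
          (Limits.biprod.fst : A ⊞ B ⟶ A).app p := by simp
      _ = 0 := by rw [hfst0]; simp
  · right
    intro p
    have hone : e.app p = 𝟙 _ := by
      apply ModuleCat.hom_ext
      apply Finsupp.lhom_ext
      intro a b
      erw [happsingle p a b]
      rw [hl1, mul_one]
      show b • Finsupp.single a (1:k) = Finsupp.single a b
      rw [Finsupp.smul_single, smul_eq_mul, mul_one]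
    have hfi : (Limits.biprod.fst : A ⊞ B ⟶ A).app p ≫
        (Limits.biprod.inl : A ⟶ A ⊞ B).app p = 𝟙 ((A ⊞ B).obj p) := by
      rw [hconj p, hone]
      simp
    have hsnd : (Limits.biprod.snd : A ⊞ B ⟶ B).app p = 0 := by
      calc (Limits.biprod.snd : A ⊞ B ⟶ B).app p
          = ((Limits.biprod.fst : A ⊞ B ⟶ A).app p ≫ (Limits.biprod.inl : A ⟶ A ⊞ B).app p) ≫
            (Limits.biprod.snd : A ⊞ B ⟶ B).app p := by rw [hfi]; simp
        _ = (Limits.biprod.fst : A ⊞ B ⟶ A).app p ≫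
            ((Limits.biprod.inl : A ⟶ A ⊞ B) ≫ (Limits.biprod.snd : A ⊞ B ⟶ B)).app p := by
            rw [NatTrans.comp_app]; simp
        _ = 0 := by simp [Limits.zero_app]
    rw [Limits.IsZero.iff_id_eq_zero]
    calc 𝟙 (B.obj p)
        = ((Limits.biprod.inr : B ⟶ A ⊞ B) ≫ (Limits.biprod.snd : A ⊞ B ⟶ B)).app p := by simp
      _ = (Limits.biprod.inr : B ⟶ A ⊞ B).app p ≫ (Limits.biprod.snd : A ⊞ B ⟶ B).app p := by
          rw [NatTrans.comp_app]
      _ = 0 := by rw [hsnd]; simp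
end
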